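/- If h1 and h2 are rank functions on subsets of a finite index set N that are each the entropy function of some quasi-uniform family of random variables indexed by N, then their pointwise sum h1 + h2 is also the entropy function of a quasi-uniform family of random variables indexed by N. -/

import Mathlib

open scoped Classical BigOperators

/-- Probability of the event `X = a` under the mass function `p`. -/
noncomputable def dist {Ω : Type*} [Fintype Ω] (p : Ω → ℝ) {A : Type*} (X : Ω → A) (a : A) : ℝ :=
  ∑ ω ∈ Finset.univ.filter (fun ω => X ω = a), p ω

/-- The (finite) support of a random variable. -/
noncomputable def supp {Ω : Type*} [Fintype Ω] (p : Ω → ℝ) {A : Type*} (X : Ω → A) : Finset A :=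
  (Finset.univ.image X).filter (fun a => 0 < dist p X a)

/-- Shannon entropy (in bits) of a random variable. -/
noncomputable def entH {Ω : Type*} [Fintype Ω] (p : Ω → ℝ) {A : Type*} (X : Ω → A) : ℝ :=
  -∑ a ∈ Finset.univ.image X, dist p X a * Real.logb 2 (dist p X a)

/-- `p` is a probability mass function. -/
def IsProb {Ω : Type*} [Fintype Ω] (p : Ω → ℝ) : Prop :=
  (∀ ω, 0 ≤ p ω) ∧ ∑ ω, p ω = 1

/-- `X` is uniformly distributed over its support. -/
def UniformOnSupport {Ω : Type*} [Fintype Ω] (p : Ω → ℝ) {A : Type*} (X : Ω → A) : Prop :=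
  ∀ a ∈ supp p X, dist p X a = ((supp p X).card : ℝ)⁻¹

/-- The tuple `(X_i : i ∈ α)` as a single random variable. -/
noncomputable def tupleOn {Ω N A : Type*} (X : N → Ω → A) (α : Finset N) (ω : Ω) :
    {i // i ∈ α} → A := fun i => X i.1 ω

/-- A family of random variables is quasi-uniform if every sub-tuple is
uniformly distributed over its support. -/
def QuasiUniformFamily {Ω : Type*} [Fintype Ω] {N A : Type*} (p : Ω → ℝ) (X : N → Ω → A) : Prop :=
  ∀ α : Finset N, UniformOnSupport p (tupleOn X α)

/-- The entropy function of a family of random variables. -/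
noncomputable def entFn {Ω : Type*} [Fintype Ω] {N A : Type*} (p : Ω → ℝ) (X : N → Ω → A)
    (α : Finset N) : ℝ := entH p (tupleOn X α)

section Aux

variable {Ω Ω' A : Type*} [Fintype Ω] [Fintype Ω']

lemma dist_comp_equiv (e : Ω' ≃ Ω) (p : Ω → ℝ) (X : Ω → A) (a : A) :
    dist (p ∘ e) (X ∘ e) a = dist p X a := by
  unfold _root_.dist
  refine Finset.sum_equiv e ?_ ?_ <;> simp

lemma image_comp_equiv (e : Ω' ≃ Ω) (X : Ω → A) :
    Finset.univ.image (X ∘ e) = Finset.univ.image X := by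
  ext a
  simp only [Finset.mem_image, Finset.mem_univ, true_and, Function.comp]
  constructor
  · rintro ⟨ω, rfl⟩; exact ⟨e ω, rfl⟩
  · rintro ⟨ω, rfl⟩; exact ⟨e.symm ω, by simp⟩

lemma supp_comp_equiv (e : Ω' ≃ Ω) (p : Ω → ℝ) (X : Ω → A) :
    supp (p ∘ e) (X ∘ e) = supp p X := by
  unfold supp
  rw [image_comp_equiv]
  refine Finset.filter_congr fun a _ => by rw [dist_comp_equiv]

lemma entH_comp_equiv (e : Ω' ≃ Ω) (p : Ω → ℝ) (X : Ω → A) :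
    entH (p ∘ e) (X ∘ e) = entH p X := by
  unfold entH
  rw [image_comp_equiv]
  congr 1
  exact Finset.sum_congr rfl fun a _ => by rw [dist_comp_equiv]

lemma dist_nonneg' {p : Ω → ℝ} (hp : ∀ ω, 0 ≤ p ω) (X : Ω → A) (a : A) :
    0 ≤ dist p X a :=
  Finset.sum_nonneg fun ω _ => hp ω

lemma mem_supp_iff {p : Ω → ℝ} (hp : ∀ ω, 0 ≤ p ω) (X : Ω → A) (a : A) :
    a ∈ supp p X ↔ 0 < dist p X a := by
  simp only [supp, Finset.mem_filter, Finset.mem_image, Finset.mem_univ, true_and,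
    and_iff_right_iff_imp]
  intro hd
  by_contra h
  have hemp : Finset.univ.filter (fun ω => X ω = a) = ∅ :=
    Finset.filter_eq_empty_iff.mpr fun {ω} _ hX => h ⟨ω, hX⟩
  rw [_root_.dist, hemp] at hd
  simp at hd

lemma sum_dist {p : Ω → ℝ} (hp : IsProb p) (X : Ω → A) :
    ∑ a ∈ Finset.univ.image X, dist p X a = 1 := by
  unfold _root_.dist
  rw [Finset.sum_fiberwise_of_maps_to (fun ω _ => Finset.mem_image_of_mem X (Finset.mem_univ ω))]
  exact hp.2

lemma supp_nonempty {p : Ω → ℝ} (hp : IsProb p) (X : Ω → A) :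
    (supp p X).Nonempty := by
  by_contra h
  rw [Finset.not_nonempty_iff_eq_empty] at h
  have h0 : ∑ a ∈ Finset.univ.image X, dist p X a = 0 := by
    refine Finset.sum_eq_zero fun a ha => ?_
    have : a ∉ supp p X := by rw [h]; exact Finset.notMem_empty a
    rw [mem_supp_iff hp.1] at this
    exact le_antisymm (not_lt.mp this) (dist_nonneg' hp.1 X a)
  rw [sum_dist hp] at h0
  norm_num at h0

lemma entH_eq_logb_card {p : Ω → ℝ} {X : Ω → A} (hp : IsProb p) (hu : UniformOnSupport p X) :
    entH p X = Real.logb 2 ((supp p X).card) := by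
  have hsub : supp p X ⊆ Finset.univ.image X := Finset.filter_subset _ _
  have hzero : ∀ a ∈ Finset.univ.image X, a ∉ supp p X →
      dist p X a * Real.logb 2 (dist p X a) = 0 := by
    intro a ha hna
    rw [mem_supp_iff hp.1] at hna
    have : dist p X a = 0 := le_antisymm (not_lt.mp hna) (dist_nonneg' hp.1 X a)
    simp [this]
  have hcard : (0:ℝ) < (supp p X).card := by
    exact_mod_cast Finset.card_pos.mpr (supp_nonempty hp X)
  unfold entH
  rw [← Finset.sum_subset hsub hzero]
  rw [Finset.sum_congr rfl fun a ha => by rw [hu a ha]]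
  rw [Finset.sum_const, nsmul_eq_mul, Real.logb_inv]
  field_simp

end Aux

lemma sum_filter_prod {Ω₁ Ω₂ : Type*} [Fintype Ω₁] [Fintype Ω₂] (p₁ : Ω₁ → ℝ) (p₂ : Ω₂ → ℝ)
    {P : Ω₁ → Prop} {Q : Ω₂ → Prop} {R : Ω₁ × Ω₂ → Prop}
    {iP : DecidablePred P} {iQ : DecidablePred Q} {iR : DecidablePred R}
    (h : ∀ ω, R ω ↔ P ω.1 ∧ Q ω.2) :
    ∑ ω ∈ Finset.univ.filter R, p₁ ω.1 * p₂ ω.2 =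
      (∑ ω₁ ∈ Finset.univ.filter P, p₁ ω₁) * (∑ ω₂ ∈ Finset.univ.filter Q, p₂ ω₂) := by
  rw [Finset.sum_mul_sum]
  have hset : Finset.univ.filter R = (Finset.univ.filter P) ×ˢ (Finset.univ.filter Q) := by
    ext ⟨ω₁, ω₂⟩
    simp only [Finset.mem_filter, Finset.mem_product, Finset.mem_univ, true_and]
    exact h (ω₁, ω₂)
  rw [hset, Finset.sum_product]

set_option maxHeartbeats 2000000 in
theorem sum_of_quasi_uniform_entropy_functions
    {N : Type*} [Fintype N]
    {Ω₁ Ω₂ A₁ A₂ : Type*} [Fintype Ω₁] [Fintype Ω₂]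
    (p₁ : Ω₁ → ℝ) (X₁ : N → Ω₁ → A₁) (p₂ : Ω₂ → ℝ) (X₂ : N → Ω₂ → A₂)
    (hp₁ : IsProb p₁) (hp₂ : IsProb p₂)
    (hq₁ : QuasiUniformFamily p₁ X₁) (hq₂ : QuasiUniformFamily p₂ X₂) :
    ∃ (Ω : Type) (inst : Fintype Ω) (p : Ω → ℝ) (X : N → Ω → A₁ × A₂),
      @IsProb Ω inst p ∧ @QuasiUniformFamily Ω inst N (A₁ × A₂) p X ∧
      ∀ α : Finset N,
        @entFn Ω inst N (A₁ × A₂) p X α = entFn p₁ X₁ α + entFn p₂ X₂ α := by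
  classical
  set e₁ := Fintype.equivFin Ω₁ with he₁
  set e₂ := Fintype.equivFin Ω₂ with he₂
  set Ω : Type := Fin (Fintype.card Ω₁) × Fin (Fintype.card Ω₂) with hΩ
  set q : Ω → ℝ := fun ω => p₁ (e₁.symm ω.1) * p₂ (e₂.symm ω.2) with hq
  set X : N → Ω → A₁ × A₂ := fun i ω => (X₁ i (e₁.symm ω.1), X₂ i (e₂.symm ω.2)) with hX
  -- positivity helper
  have hpos : ∀ x y : ℝ, 0 ≤ x → 0 ≤ y → (0 < x * y ↔ 0 < x ∧ 0 < y) := by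
    intro x y hx hy
    constructor
    · intro h
      refine ⟨hx.lt_of_ne fun h0 => ?_, hy.lt_of_ne fun h0 => ?_⟩ <;>
        · rw [← h0] at h; simp at h
    · rintro ⟨h1, h2⟩; exact mul_pos h1 h2
  -- key product formula for dist
  have key : ∀ (α : Finset N) (f : {i // i ∈ α} → A₁ × A₂),
      dist q (tupleOn X α) f =
        dist p₁ (tupleOn X₁ α) (fun i => (f i).1) * dist p₂ (tupleOn X₂ α) (fun i => (f i).2) := by
    intro α f
    rw [← dist_comp_equiv e₁.symm p₁ (tupleOn X₁ α) (fun i => (f i).1),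
        ← dist_comp_equiv e₂.symm p₂ (tupleOn X₂ α) (fun i => (f i).2)]
    unfold _root_.dist
    refine sum_filter_prod (p₁ ∘ e₁.symm) (p₂ ∘ e₂.symm) fun ω => ?_
    simp only [tupleOn, funext_iff, Function.comp, hX, Prod.ext_iff, Prod.mk.injEq]
    exact forall_and
  have hq0 : ∀ ω, 0 ≤ q ω := fun ω => mul_nonneg (hp₁.1 _) (hp₂.1 _)
  have hqprob : IsProb q := by
    refine ⟨hq0, ?_⟩
    rw [Fintype.sum_prod_type]
    have : ∀ ω₁, ∑ ω₂, q (ω₁, ω₂) = p₁ (e₁.symm ω₁) * ∑ ω₂, p₂ (e₂.symm ω₂) := by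
      intro ω₁; rw [Finset.mul_sum]
    rw [Finset.sum_congr rfl fun ω₁ _ => this ω₁, ← Finset.sum_mul]
    rw [Equiv.sum_comp e₁.symm p₁, Equiv.sum_comp e₂.symm p₂, hp₁.2, hp₂.2, one_mul]
  -- support membership characterization
  have hmem : ∀ (α : Finset N) (f : {i // i ∈ α} → A₁ × A₂),
      f ∈ supp q (tupleOn X α) ↔
        (fun i => (f i).1) ∈ supp p₁ (tupleOn X₁ α) ∧
        (fun i => (f i).2) ∈ supp p₂ (tupleOn X₂ α) := by
    intro α f
    rw [mem_supp_iff hq0, mem_supp_iff hp₁.1, mem_supp_iff hp₂.1, key]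
    exact hpos _ _ (dist_nonneg' hp₁.1 _ _) (dist_nonneg' hp₂.1 _ _)
  -- card of support
  have hcard : ∀ α : Finset N,
      (supp q (tupleOn X α)).card =
        (supp p₁ (tupleOn X₁ α)).card * (supp p₂ (tupleOn X₂ α)).card := by
    intro α
    rw [← Finset.card_product]
    refine Finset.card_nbij' (fun f => (fun i => (f i).1, fun i => (f i).2))
      (fun ab => fun i => (ab.1 i, ab.2 i)) ?_ ?_ ?_ ?_
    · intro f hf
      rw [Finset.mem_coe, Finset.mem_product]
      exact (hmem α f).mp (Finset.mem_coe.mp hf)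
    · intro ab hab
      rw [Finset.mem_coe, Finset.mem_product] at hab
      exact Finset.mem_coe.mpr ((hmem α _).mpr hab)
    · intro f _; rfl
    · intro ab _; rfl
  refine ⟨Ω, inferInstance, q, X, hqprob, ?_, ?_⟩
  · -- quasi-uniform
    intro α f hf
    have h12 := (hmem α f).mp hf
    rw [key, hq₁ α _ h12.1, hq₂ α _ h12.2, hcard α]
    rw [Nat.cast_mul, mul_inv]
  · -- entropy
    intro α
    have hu : UniformOnSupport q (tupleOn X α) := by
      intro f hf
      have h12 := (hmem α f).mp hf
      rw [key, hq₁ α _ h12.1, hq₂ α _ h12.2, hcard α, Nat.cast_mul, mul_inv]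
    have c₁pos : (0:ℝ) < (supp p₁ (tupleOn X₁ α)).card := by
      exact_mod_cast Finset.card_pos.mpr (supp_nonempty hp₁ _)
    have c₂pos : (0:ℝ) < (supp p₂ (tupleOn X₂ α)).card := by
      exact_mod_cast Finset.card_pos.mpr (supp_nonempty hp₂ _)
    unfold entFn
    rw [entH_eq_logb_card hqprob hu, entH_eq_logb_card hp₁ (hq₁ α),
      entH_eq_logb_card hp₂ (hq₂ α), hcard α, Nat.cast_mul,
      Real.logb_mul (ne_of_gt c₁pos) (ne_of_gt c₂pos)]
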